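/- For every real α with 0 < α < 1, the integral ∫_{−∞}^{∞} e^{−α·τ}·(τ + log(1 + e^{−τ})) dτ converges and equals π / (α·sin(π·α)). -/

import Mathlib

open Real MeasureTheory Set Filter Topology

/-- exp(b*x) integrable on Iic c for b > 0 -/
lemma exp_mul_integrableOn_Iic {b : ℝ} (hb : 0 < b) (c : ℝ) :
    IntegrableOn (fun x : ℝ => Real.exp (b * x)) (Iic c) := by
  rw [← Measure.map_neg_eq_self (volume : Measure ℝ)]
  have m : MeasurableEmbedding fun x : ℝ => -x := (Homeomorph.neg ℝ).measurableEmbedding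
  rw [m.integrableOn_map_iff]
  simp_rw [Function.comp_def, neg_preimage, neg_Iic]
  refine (integrableOn_Ici_iff_integrableOn_Ioi).mpr ?_
  simpa [mul_neg, neg_mul] using exp_neg_integrableOn_Ioi (-c) hb

/-- g integrable -/
lemma g_integrable {s : ℝ} (hs0 : 0 < s) (hs1 : s < 1) :
    Integrable (fun τ : ℝ => Real.exp (s * τ) / (1 + Real.exp τ)) := by
  have hcont : Continuous fun τ : ℝ => Real.exp (s * τ) / (1 + Real.exp τ) :=
    (Real.continuous_exp.comp (continuous_const.mul continuous_id)).div
      (continuous_const.add Real.continuous_exp) (fun τ => by positivity)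
  rw [← integrableOn_univ, ← Set.Iic_union_Ioi (a := (0:ℝ))]
  refine IntegrableOn.union ?_ ?_
  · refine (exp_mul_integrableOn_Iic hs0 0).mono' hcont.aestronglyMeasurable ?_
    filter_upwards with τ
    rw [Real.norm_eq_abs, abs_div, abs_of_pos (Real.exp_pos _), abs_of_pos (by positivity)]
    rw [div_le_iff₀ (by positivity)]
    nlinarith [Real.exp_pos τ, Real.exp_pos (s*τ)]
  · refine ((exp_neg_integrableOn_Ioi 0 (by linarith : (0:ℝ) < 1 - s))).mono'
      hcont.aestronglyMeasurable ?_
    filter_upwards with τ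
    rw [Real.norm_eq_abs, abs_div, abs_of_pos (Real.exp_pos _), abs_of_pos (by positivity)]
    rw [div_le_iff₀ (by positivity)]
    have h1 : Real.exp (-(1-s)*τ) * Real.exp τ = Real.exp (s*τ) := by
      rw [← Real.exp_add]; ring_nf
    nlinarith [Real.exp_pos (-(1-s)*τ)]

lemma f_integrable {α : ℝ} (h1 : 0 < α) (h2 : α < 1) :
    Integrable (fun τ : ℝ => Real.exp (-α * τ) * Real.log (1 + Real.exp τ)) := by
  have hcont : Continuous fun τ : ℝ => Real.exp (-α * τ) * Real.log (1 + Real.exp τ) := by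
    refine (Real.continuous_exp.comp (continuous_const.mul continuous_id)).mul ?_
    exact (continuous_const.add Real.continuous_exp).log (fun τ => (by positivity : (0:ℝ) < 1 + Real.exp τ).ne')
  have hlogpos : ∀ τ : ℝ, 0 ≤ Real.log (1 + Real.exp τ) := fun τ =>
    Real.log_nonneg (by nlinarith [Real.exp_pos τ])
  rw [← integrableOn_univ, ← Set.Iic_union_Ioi (a := (0:ℝ))]
  refine IntegrableOn.union ?_ ?_
  · refine (exp_mul_integrableOn_Iic (by linarith : (0:ℝ) < 1 - α) 0).mono'
      hcont.aestronglyMeasurable ?_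
    filter_upwards with τ
    rw [Real.norm_eq_abs, abs_of_nonneg (mul_nonneg (Real.exp_pos _).le (hlogpos _))]
    have hb : Real.log (1 + Real.exp τ) ≤ Real.exp τ := by
      have := Real.log_le_sub_one_of_pos (x := 1 + Real.exp τ) (by positivity)
      linarith
    calc Real.exp (-α * τ) * Real.log (1 + Real.exp τ)
        ≤ Real.exp (-α * τ) * Real.exp τ := by
          exact mul_le_mul_of_nonneg_left hb (le_of_lt (Real.exp_pos _))
      _ = Real.exp ((1 - α) * τ) := by rw [← Real.exp_add]; ring_nf
  · have hI1 : IntegrableOn (fun τ : ℝ => Real.log 2 * Real.exp (-α * τ)) (Ioi 0) :=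
      (exp_neg_integrableOn_Ioi 0 h1).const_mul _
    have hI2 : IntegrableOn (fun τ : ℝ => (2/α) * Real.exp (-(α/2) * τ)) (Ioi 0) :=
      (exp_neg_integrableOn_Ioi 0 (by linarith)).const_mul _
    refine (hI1.add hI2).mono' hcont.aestronglyMeasurable ?_
    filter_upwards [ae_restrict_mem measurableSet_Ioi] with τ (hτ : 0 < τ)
    rw [Real.norm_eq_abs, abs_of_nonneg (mul_nonneg (Real.exp_pos _).le (hlogpos _))]
    have h2e : (1:ℝ) ≤ Real.exp τ := Real.one_le_exp hτ.le
    have hb : Real.log (1 + Real.exp τ) ≤ Real.log 2 + τ := by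
      have : (1:ℝ) + Real.exp τ ≤ 2 * Real.exp τ := by linarith
      calc Real.log (1 + Real.exp τ) ≤ Real.log (2 * Real.exp τ) :=
            Real.log_le_log (by positivity) this
        _ = Real.log 2 + τ := by rw [Real.log_mul two_ne_zero (Real.exp_ne_zero _), Real.log_exp]
    have hτb : τ ≤ (2/α) * Real.exp ((α/2) * τ) := by
      have h := Real.add_one_le_exp ((α/2) * τ)
      rw [div_mul_eq_mul_div, le_div_iff₀ h1]
      nlinarith
    calc Real.exp (-α * τ) * Real.log (1 + Real.exp τ)
        ≤ Real.exp (-α * τ) * (Real.log 2 + τ) :=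
          mul_le_mul_of_nonneg_left hb (le_of_lt (Real.exp_pos _))
      _ ≤ Real.exp (-α * τ) * (Real.log 2 + (2/α) * Real.exp ((α/2) * τ)) := by
          refine mul_le_mul_of_nonneg_left (by linarith) (le_of_lt (Real.exp_pos _))
      _ = Real.log 2 * Real.exp (-α * τ) + (2/α) * (Real.exp (-α*τ) * Real.exp ((α/2) * τ)) := by
          ring
      _ = Real.log 2 * Real.exp (-α * τ) + (2/α) * Real.exp (-(α/2) * τ) := by
          rw [← Real.exp_add]; ring_nf

lemma beta_val {s : ℝ} (hs0 : 0 < s) (hs1 : s < 1) :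
    ∫ u in Ioo (0:ℝ) 1, u ^ (s - 1) * (1 - u) ^ (-s) = π / Real.sin (π * s) := by
  have hβ : Complex.betaIntegral s (1 - s) = ((π / Real.sin (π * s) : ℝ) : ℂ) := by
    have h1 : Complex.Gamma s * Complex.Gamma (1 - s) =
        Complex.Gamma (s + (1 - s)) * Complex.betaIntegral s (1 - s) :=
      Complex.Gamma_mul_Gamma_eq_betaIntegral (by simpa using hs0)
        (by simp [Complex.sub_re]; norm_num; simpa using hs1)
    rw [show (s:ℂ) + (1 - s) = 1 by ring, Complex.Gamma_one, one_mul] at h1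
    rw [← h1, Complex.Gamma_mul_Gamma_one_sub]
    push_cast [Complex.ofReal_sin]
    ring
  have hEq : ∀ x ∈ Set.uIcc (0:ℝ) 1,
      (x:ℂ) ^ ((s:ℂ) - 1) * ((1:ℂ) - x) ^ (((1-s):ℂ) - 1)
        = (((x : ℝ) ^ (s - 1) * (1 - x) ^ (-s) : ℝ) : ℂ) := by
    intro x hx
    rw [Set.uIcc_of_le (by norm_num)] at hx
    have hx0 : (0:ℝ) ≤ x := hx.1
    have hx1 : (0:ℝ) ≤ 1 - x := by linarith [hx.2]
    have e1 : ((x:ℂ)) ^ ((s:ℂ) - 1) = ((x ^ (s-1) : ℝ) : ℂ) := by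
      rw [Complex.ofReal_cpow hx0]; norm_num
    have e2 : ((1:ℂ) - x) ^ (((1-s):ℂ) - 1) = (((1-x) ^ (-s) : ℝ) : ℂ) := by
      rw [show ((1:ℂ) - x) = (((1-x:ℝ)):ℂ) by push_cast; ring,
        Complex.ofReal_cpow hx1]
      norm_num
    rw [e1, e2, ← Complex.ofReal_mul]
  have hbi : Complex.betaIntegral s (1 - s) =
      ((∫ u in (0:ℝ)..1, u ^ (s - 1) * (1 - u) ^ (-s) : ℝ) : ℂ) := by
    rw [Complex.betaIntegral, ← intervalIntegral.integral_ofReal]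
    exact intervalIntegral.integral_congr fun x hx => hEq x hx
  have hval : (∫ u in (0:ℝ)..1, u ^ (s - 1) * (1 - u) ^ (-s) : ℝ) = π / Real.sin (π * s) := by
    have := (hβ.symm.trans hbi).symm
    exact_mod_cast this
  rw [← integral_Ioc_eq_integral_Ioo, ← intervalIntegral.integral_of_le (by norm_num : (0:ℝ) ≤ 1)]
  exact hval

lemma g_value {s : ℝ} (hs0 : 0 < s) (hs1 : s < 1) :
    ∫ τ : ℝ, Real.exp (s * τ) / (1 + Real.exp τ) = π / Real.sin (π * s) := by
  set φ : ℝ → ℝ := fun u => Real.log u - Real.log (1 - u) with hφ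
  set φ' : ℝ → ℝ := fun u => u⁻¹ + (1 - u)⁻¹ with hφ'
  have hderiv : ∀ u ∈ Ioo (0:ℝ) 1, HasDerivAt φ (φ' u) u := by
    intro u hu
    have h1u : (0:ℝ) < 1 - u := by linarith [hu.2]
    have h1 : HasDerivAt Real.log u⁻¹ u := Real.hasDerivAt_log (ne_of_gt hu.1)
    have h2 : HasDerivAt (fun u : ℝ => Real.log (1 - u)) (-1 / (1 - u)) u :=
      HasDerivAt.log ((hasDerivAt_id u).const_sub 1) (ne_of_gt h1u)
    have := h1.sub h2
    refine this.congr_deriv (Eq.symm ?_)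
    simp only [hφ']
    field_simp
    ring
  have hmono : StrictMonoOn φ (Ioo (0:ℝ) 1) := by
    refine strictMonoOn_of_deriv_pos (convex_Ioo 0 1)
      (fun u hu => (hderiv u hu).continuousAt.continuousWithinAt) (fun u hu => ?_)
    rw [interior_Ioo] at hu
    rw [(hderiv u hu).deriv]
    have h1u : (0:ℝ) < 1 - u := by linarith [hu.2]
    have := hu.1
    positivity
  have himg : φ '' Ioo (0:ℝ) 1 = univ := by
    refine eq_univ_of_forall fun y => ?_
    have hpos : (0:ℝ) < 1 + Real.exp y := by positivity
    refine ⟨Real.exp y / (1 + Real.exp y), ⟨by positivity,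
      (div_lt_one hpos).2 (by linarith [Real.exp_pos y])⟩, ?_⟩
    have h1u : 1 - Real.exp y / (1 + Real.exp y) = 1 / (1 + Real.exp y) := by
      field_simp
      ring
    simp only [hφ, h1u, Real.log_div (Real.exp_ne_zero y) hpos.ne', Real.log_exp,
      one_div, Real.log_inv]
    ring
  have hsub := integral_image_eq_integral_abs_deriv_smul measurableSet_Ioo
      (fun u hu => (hderiv u hu).hasDerivWithinAt) (hmono.injOn)
      (fun τ => Real.exp (s * τ) / (1 + Real.exp τ))
  rw [himg, setIntegral_univ] at hsub
  rw [hsub, ← beta_val hs0 hs1]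
  refine setIntegral_congr_fun measurableSet_Ioo fun u hu => ?_
  have hu0 : (0:ℝ) < u := hu.1
  have h1u : (0:ℝ) < 1 - u := by linarith [hu.2]
  have expφ : Real.exp (φ u) = u / (1 - u) := by
    rw [hφ]; simp only []
    rw [Real.exp_sub, Real.exp_log hu0, Real.exp_log h1u]
  have expsφ : Real.exp (s * φ u) = u ^ s / (1 - u) ^ s := by
    rw [mul_comm, Real.exp_mul, expφ, Real.div_rpow hu0.le h1u.le]
  have hden : 1 + Real.exp (φ u) = 1 / (1 - u) := by
    rw [expφ]; field_simp; ring
  have habs : |φ' u| = u⁻¹ + (1 - u)⁻¹ := by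
    rw [hφ']; exact abs_of_pos (by positivity)
  rw [smul_eq_mul, habs, expsφ, hden,
    Real.rpow_sub_one hu0.ne', Real.rpow_neg h1u.le]
  have hus : (0:ℝ) < u ^ s := Real.rpow_pos_of_pos hu0 s
  have h1us : (0:ℝ) < (1-u) ^ s := Real.rpow_pos_of_pos h1u s
  field_simp
  ring

theorem stmt_12 (α : ℝ) (h1 : 0 < α) (h2 : α < 1) :
    MeasureTheory.Integrable
      (fun τ : ℝ => Real.exp (-α * τ) * (τ + Real.log (1 + Real.exp (-τ)))) ∧
    (∫ τ : ℝ, Real.exp (-α * τ) * (τ + Real.log (1 + Real.exp (-τ))))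
      = Real.pi / (α * Real.sin (Real.pi * α)) := by
  have hfg : (fun τ : ℝ => Real.exp (-α * τ) * (τ + Real.log (1 + Real.exp (-τ))))
      = fun τ : ℝ => Real.exp (-α * τ) * Real.log (1 + Real.exp τ) := by
    funext τ
    have hpos : (0:ℝ) < 1 + Real.exp τ := by positivity
    have he : (1:ℝ) + Real.exp (-τ) = (1 + Real.exp τ) / Real.exp τ := by
      rw [Real.exp_neg]; field_simp; ring
    rw [he, Real.log_div hpos.ne' (Real.exp_ne_zero τ), Real.log_exp]
    ring
  have hf := f_integrable h1 h2
  have hs0 : (0:ℝ) < 1 - α := by linarith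
  have hs1 : (1:ℝ) - α < 1 := by linarith
  have hg := g_integrable hs0 hs1
  refine ⟨by rw [hfg]; exact hf, ?_⟩
  rw [hfg]
  set h : ℝ → ℝ := fun τ => Real.exp (-α * τ) * Real.log (1 + Real.exp τ) with hh
  have hlogpos : ∀ τ : ℝ, 0 ≤ Real.log (1 + Real.exp τ) := fun τ =>
    Real.log_nonneg (by nlinarith [Real.exp_pos τ])
  have hhpos : ∀ τ : ℝ, 0 ≤ h τ := fun τ =>
    mul_nonneg (Real.exp_pos _).le (hlogpos τ)
  -- limits
  have htop : Tendsto h atTop (𝓝 0) := by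
    have e1 : Tendsto (fun τ : ℝ => Real.exp (-α * τ)) atTop (𝓝 0) := by
      have ht := Real.tendsto_exp_neg_atTop_nhds_zero.comp
        (tendsto_id.const_mul_atTop h1 (f := id))
      exact ht.congr fun τ => by simp [Function.comp, neg_mul]
    have e2 : Tendsto (fun τ : ℝ => Real.exp (-(α/2) * τ)) atTop (𝓝 0) := by
      have ht := Real.tendsto_exp_neg_atTop_nhds_zero.comp
        (tendsto_id.const_mul_atTop (by linarith : (0:ℝ) < α/2) (f := id))
      exact ht.congr fun τ => by simp [Function.comp, neg_mul]
    have e3 : Tendsto (fun τ : ℝ => Real.log 2 * Real.exp (-α * τ)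
        + (2/α) * Real.exp (-(α/2) * τ)) atTop (𝓝 (Real.log 2 * 0 + (2/α) * 0)) :=
      (e1.const_mul _).add (e2.const_mul _)
    rw [mul_zero, mul_zero, add_zero] at e3
    refine squeeze_zero' (Eventually.of_forall hhpos) ?_ e3
    filter_upwards [eventually_ge_atTop (0:ℝ)] with τ hτ
    have h2e : (1:ℝ) ≤ Real.exp τ := Real.one_le_exp hτ
    have hb : Real.log (1 + Real.exp τ) ≤ Real.log 2 + τ := by
      have hle : (1:ℝ) + Real.exp τ ≤ 2 * Real.exp τ := by linarith
      calc Real.log (1 + Real.exp τ) ≤ Real.log (2 * Real.exp τ) :=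
            Real.log_le_log (by positivity) hle
        _ = Real.log 2 + τ := by rw [Real.log_mul two_ne_zero (Real.exp_ne_zero _), Real.log_exp]
    have hτb : τ ≤ (2/α) * Real.exp ((α/2) * τ) := by
      have hx := Real.add_one_le_exp ((α/2) * τ)
      rw [div_mul_eq_mul_div, le_div_iff₀ h1]
      nlinarith
    calc h τ ≤ Real.exp (-α * τ) * (Real.log 2 + τ) :=
          mul_le_mul_of_nonneg_left hb (Real.exp_pos _).le
      _ ≤ Real.exp (-α * τ) * (Real.log 2 + (2/α) * Real.exp ((α/2) * τ)) :=
          mul_le_mul_of_nonneg_left (by linarith) (Real.exp_pos _).le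
      _ = Real.log 2 * Real.exp (-α * τ)
          + (2/α) * (Real.exp (-α * τ) * Real.exp ((α/2) * τ)) := by ring
      _ = Real.log 2 * Real.exp (-α * τ) + (2/α) * Real.exp (-(α/2) * τ) := by
          rw [← Real.exp_add]; ring_nf
  have hbot : Tendsto h atBot (𝓝 0) := by
    have e1 : Tendsto (fun τ : ℝ => Real.exp ((1 - α) * τ)) atBot (𝓝 0) := by
      exact Real.tendsto_exp_atBot.comp (tendsto_id.const_mul_atBot hs0)
    refine squeeze_zero' (Eventually.of_forall hhpos) ?_ e1
    filter_upwards with τ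
    have hb : Real.log (1 + Real.exp τ) ≤ Real.exp τ := by
      have := Real.log_le_sub_one_of_pos (x := 1 + Real.exp τ) (by positivity)
      linarith
    calc h τ ≤ Real.exp (-α * τ) * Real.exp τ :=
          mul_le_mul_of_nonneg_left hb (Real.exp_pos _).le
      _ = Real.exp ((1 - α) * τ) := by rw [← Real.exp_add]; ring_nf
  -- FTC
  set F : ℝ → ℝ := fun τ => -(α⁻¹) * h τ with hF
  have hderiv : ∀ τ : ℝ, HasDerivAt F
      (h τ - α⁻¹ * (Real.exp ((1 - α) * τ) / (1 + Real.exp τ))) τ := by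
    intro τ
    have hpos : (0:ℝ) < 1 + Real.exp τ := by positivity
    have h1' : HasDerivAt (fun τ : ℝ => Real.exp (-α * τ)) (-α * Real.exp (-α * τ)) τ := by
      have := ((hasDerivAt_id τ).const_mul (-α)).exp
      simpa [mul_comm] using this
    have h2' : HasDerivAt (fun τ : ℝ => Real.log (1 + Real.exp τ))
        (Real.exp τ / (1 + Real.exp τ)) τ := by
      have := ((Real.hasDerivAt_exp τ).const_add 1).log hpos.ne'
      simpa using this
    have hD := (h1'.mul h2').const_mul (-(α⁻¹))
    refine hD.congr_deriv (Eq.symm ?_)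
    rw [hh]
    simp only []
    rw [show (1 - α) * τ = -α * τ + τ by ring, Real.exp_add]
    field_simp
    ring
  have hgint' : Integrable (fun τ : ℝ => h τ
      - α⁻¹ * (Real.exp ((1 - α) * τ) / (1 + Real.exp τ))) := hf.sub (hg.const_mul _)
  have hFtop : Tendsto F atTop (𝓝 0) := by
    have := htop.const_mul (-(α⁻¹)); rw [mul_zero] at this; exact this
  have hFbot : Tendsto F atBot (𝓝 0) := by
    have := hbot.const_mul (-(α⁻¹)); rw [mul_zero] at this; exact this
  have h0 := integral_of_hasDerivAt_of_tendsto hderiv hgint' hFbot hFtop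
  rw [sub_zero] at h0
  rw [integral_sub hf (hg.const_mul _), integral_const_mul, g_value hs0 hs1,
    sub_eq_zero] at h0
  rw [h0, show π * (1 - α) = π - π * α by ring, Real.sin_pi_sub]
  simp only [div_eq_mul_inv, mul_inv]
  ring
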